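/- Let β, τ : [a,b] → ℝ be continuous semialgebraic functions with β(x) < τ(x) for all x ∈ (a,b). Then there exist a constant C > 0 and a positive integer r such that for every ħ ∈ (0, (b−a)/2) and every x ∈ [a+ħ, b−ħ], one has τ(x) − β(x) ≥ C ħ^r. -/

import Mathlib

open Set Filter

/-- An `ε`-pixel: the square `[(i-1)ε, iε] × [(j-1)ε, jε]`. -/
def Pixel (ε : ℝ) (i j : ℤ) : Set (ℝ × ℝ) :=
  Icc ((i - 1) * ε) (i * ε) ×ˢ Icc ((j - 1) * ε) (j * ε)

/-- The `ε`-pixelation of a set `S`: the union of all `ε`-pixels meeting `S`. -/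
def Pixelation (ε : ℝ) (S : Set (ℝ × ℝ)) : Set (ℝ × ℝ) :=
  ⋃ (i : ℤ) (j : ℤ) (_ : (Pixel ε i j ∩ S).Nonempty), Pixel ε i j

/-- A point `a` is `ε`-generic if `a ∉ εℤ`. -/
def EpsGeneric (ε a : ℝ) : Prop := ∀ n : ℤ, a ≠ n * ε

/-- The column of the `ε`-pixelation of `S` over a point `a`: the union of the
`ε`-pixels of `P_ε(S)` that meet the vertical line `{x = a}`. -/
def Column (ε : ℝ) (S : Set (ℝ × ℝ)) (a : ℝ) : Set (ℝ × ℝ) :=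
  ⋃ (i : ℤ) (j : ℤ) (_ : (Pixel ε i j ∩ S).Nonempty)
    (_ : a ∈ Icc ((i - 1) * ε) (i * ε)), Pixel ε i j

/-- A semialgebraic subset of `ℝⁿ`: a finite union of sets, each described by finitely
many polynomial equations and finitely many (strict) polynomial inequalities. -/
def IsSemialgebraic {n : ℕ} (X : Set (Fin n → ℝ)) : Prop :=
  ∃ F : Finset (Finset (MvPolynomial (Fin n) ℝ) × Finset (MvPolynomial (Fin n) ℝ)),
    X = ⋃ c ∈ F,
      {x | (∀ p ∈ c.1, MvPolynomial.eval x p = 0) ∧ ∀ q ∈ c.2, 0 < MvPolynomial.eval x q}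

/-- Semialgebraic subsets of the plane `ℝ × ℝ`. -/
def IsSemialgebraic2 (X : Set (ℝ × ℝ)) : Prop :=
  IsSemialgebraic {z : Fin 2 → ℝ | (z 0, z 1) ∈ X}

/-- A function `f` is semialgebraic on `[a,b]` if its graph over `[a,b]` is semialgebraic. -/
def IsSemialgebraicFnOn (f : ℝ → ℝ) (a b : ℝ) : Prop :=
  IsSemialgebraic2 {p : ℝ × ℝ | p.1 ∈ Icc a b ∧ p.2 = f p.1}

/-- The set of connected components of a planar set. -/
def componentsOf (A : Set (ℝ × ℝ)) : Set (Set (ℝ × ℝ)) :=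
  {C | ∃ x ∈ A, C = connectedComponentIn A x}

/-- The number of connected components of a planar set. -/
noncomputable def numComponents (A : Set (ℝ × ℝ)) : ℕ := (componentsOf A).ncard

/-- The component counter `n_S(x)`: the number of connected components of the
intersection of `S` with the vertical line `{x = x₀}`. -/
noncomputable def compCounter (S : Set (ℝ × ℝ)) (x : ℝ) : ℕ :=
  numComponents (S ∩ {p : ℝ × ℝ | p.1 = x})

/-- The stack counter `n_{S,ε}(x)`: the number of connected components of the column
of `P_ε(S)` over `x`. -/
noncomputable def stackCounter (S : Set (ℝ × ℝ)) (ε x : ℝ) : ℕ :=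
  numComponents (Column ε S x)

/-- A jumping point of the component counter: a point where `n_S` differs from its
left limit or from its right limit. -/
def IsJumpingPoint (S : Set (ℝ × ℝ)) (x₀ : ℝ) : Prop :=
  ¬ (∀ᶠ x in nhdsWithin x₀ (Iio x₀), compCounter S x = compCounter S x₀) ∨
  ¬ (∀ᶠ x in nhdsWithin x₀ (Ioi x₀), compCounter S x = compCounter S x₀)

/-- A jumping point of the stack counter `n_{S,ε}`: a point `x₀ ∈ εℤ + ε/2` with
`n_{S,ε}(x₀ - ε) ≠ n_{S,ε}(x₀)`. -/
def IsEpsJumpingPoint (S : Set (ℝ × ℝ)) (ε x₀ : ℝ) : Prop :=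
  (∃ k : ℤ, x₀ = k * ε + ε / 2) ∧ stackCounter S ε (x₀ - ε) ≠ stackCounter S ε x₀



noncomputable section AuxLoja
open Polynomial

def pev (s t : ℝ) (P : Polynomial (Polynomial ℝ)) : ℝ :=
  Polynomial.eval₂ (Polynomial.evalRingHom s) t P

lemma pev_continuousOn (T : Polynomial (Polynomial ℝ)) {w : ℝ → ℝ} {s : Set ℝ}
    (hw : ContinuousOn w s) : ContinuousOn (fun x => pev x (w x) T) s := by
  have hrep : ∀ x, pev x (w x) T =
      ∑ i ∈ Finset.range (T.natDegree + 1), (T.coeff i).eval x * (w x) ^ i := by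
    intro x
    rw [pev, Polynomial.eval₂_eq_sum_range]
    rfl
  simp only [hrep]
  apply continuousOn_finset_sum
  intro i _
  exact ((T.coeff i).continuous.continuousOn).mul (hw.pow i)

lemma pow_aux {u T : ℝ} (hu : 0 ≤ u) (huT : u ≤ T) (hT : 1 ≤ T) {j r : ℕ} (hjr : j ≤ r) :
    u ^ r ≤ u ^ j * T ^ r := by
  have h1 : u ^ r = u ^ j * u ^ (r - j) := by rw [← pow_add]; congr 1; omega
  rw [h1]
  apply mul_le_mul_of_nonneg_left _ (pow_nonneg hu j)
  calc u ^ (r - j) ≤ T ^ (r - j) := pow_le_pow_left₀ hu huT _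
    _ ≤ T ^ r := pow_le_pow_right₀ hT (Nat.sub_le r j)

/-- local lower bound for `|p₀|` near a point `c`. -/
lemma near_bound {p0 : Polynomial ℝ} (hp0 : p0 ≠ 0) (c : ℝ) :
    ∃ δ > (0:ℝ), ∃ e > (0:ℝ), ∀ x : ℝ, |x - c| ≤ δ →
      e * |x - c| ^ (p0.rootMultiplicity c) ≤ |p0.eval x| := by
  set m := p0.rootMultiplicity c with hm
  set q := p0 /ₘ (X - C c) ^ m with hq
  have hfac : (X - C c) ^ m * q = p0 := Polynomial.pow_mul_divByMonic_rootMultiplicity_eq p0 c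
  have hqc : q.eval c ≠ 0 := Polynomial.eval_divByMonic_pow_rootMultiplicity_ne_zero c hp0
  have hcont : Continuous fun x : ℝ => |q.eval x| := q.continuous.abs
  have hU : IsOpen {x : ℝ | |q.eval c| / 2 < |q.eval x|} :=
    isOpen_lt continuous_const hcont
  have hcU : c ∈ {x : ℝ | |q.eval c| / 2 < |q.eval x|} := by
    simp only [mem_setOf_eq]
    have : 0 < |q.eval c| := abs_pos.2 hqc
    linarith
  obtain ⟨δ, hδ, hball⟩ := Metric.isOpen_iff.1 hU c hcU
  refine ⟨δ / 2, by linarith, |q.eval c| / 2, by positivity, ?_⟩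
  intro x hx
  have hxU : x ∈ {x : ℝ | |q.eval c| / 2 < |q.eval x|} := by
    apply hball
    rw [Metric.mem_ball, Real.dist_eq]
    linarith
  simp only [mem_setOf_eq] at hxU
  have hev : p0.eval x = (x - c) ^ m * q.eval x := by
    conv_lhs => rw [← hfac]
    simp [Polynomial.eval_pow]
  rw [hev, abs_mul, abs_pow]
  nlinarith [pow_nonneg (abs_nonneg (x - c)) m, hxU]

lemma endgameAux {a b : ℝ} (hab : a < b) {g : ℝ → ℝ} (hg : ContinuousOn g (Icc a b))
    (hgpos : ∀ x ∈ Ioo a b, 0 < g x)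
    {R : Polynomial (Polynomial ℝ)} (hR : R ≠ 0)
    (hvan : ∀ s ∈ Icc a b, pev s (g s) R = 0) :
    ∃ C > (0:ℝ), ∃ r : ℕ, 0 < r ∧
      ∀ h ∈ Ioo (0:ℝ) ((b - a) / 2), ∀ x ∈ Icc (a + h) (b - h),
        C * h ^ r ≤ g x := by
  classical
  -- peel off the power of `z` dividing `R`
  set m := R.natTrailingDegree with hmdef
  obtain ⟨R1, hR1⟩ : (X : Polynomial (Polynomial ℝ)) ^ m ∣ R :=
    Polynomial.X_pow_dvd_iff.2 fun d hd => Polynomial.coeff_eq_zero_of_lt_natTrailingDegree hd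
  set p0 : Polynomial ℝ := R1.coeff 0 with hp0def
  have hc0 : R.coeff m = R1.coeff 0 := by
    rw [hR1]
    simpa using Polynomial.coeff_X_pow_mul R1 m 0
  have hp0ne : p0 ≠ 0 := by
    have htc : R.trailingCoeff ≠ 0 := fun h => hR (Polynomial.trailingCoeff_eq_zero.1 h)
    rw [Polynomial.trailingCoeff] at htc
    rw [hp0def, ← hc0]
    exact htc
  have hvan1 : ∀ s ∈ Ioo a b, pev s (g s) R1 = 0 := by
    intro s hs
    have h0 := hvan s (Ioo_subset_Icc_self hs)
    rw [hR1, pev, Polynomial.eval₂_mul, Polynomial.eval₂_X_pow] at h0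
    rcases mul_eq_zero.1 h0 with h | h
    · exact absurd h (pow_ne_zero _ (ne_of_gt (hgpos s hs)))
    · exact h
  obtain ⟨M0, hM0⟩ := (isCompact_Icc (a := a) (b := b)).exists_bound_of_continuousOn
    (pev_continuousOn R1.divX hg)
  set M1 : ℝ := max M0 1 with hM1def
  have hM1pos : (0:ℝ) < M1 := lt_of_lt_of_le one_pos (le_max_right _ _)
  have hlow : ∀ s ∈ Ioo a b, |p0.eval s| ≤ M1 * g s := by
    intro s hs
    have h1 := hvan1 s hs
    have hdecomp := Polynomial.X_mul_divX_add R1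
    have h2 := congrArg (pev s (g s)) hdecomp
    rw [pev, Polynomial.eval₂_add, Polynomial.eval₂_mul, Polynomial.eval₂_X,
      Polynomial.eval₂_C] at h2
    rw [h1] at h2
    have hZ : |pev s (g s) R1.divX| ≤ M1 := by
      have := hM0 s (Ioo_subset_Icc_self hs)
      rw [Real.norm_eq_abs] at this
      exact le_trans this (le_max_left _ _)
    have h2' : g s * pev s (g s) R1.divX + p0.eval s = 0 := h2
    have hp0eq : p0.eval s = -(g s * pev s (g s) R1.divX) := by linarith
    rw [hp0eq, abs_neg, abs_mul, abs_of_pos (hgpos s hs)]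
    calc g s * |pev s (g s) R1.divX| ≤ g s * M1 :=
          mul_le_mul_of_nonneg_left hZ (hgpos s hs).le
      _ = M1 * g s := mul_comm _ _
  obtain ⟨δa, hδa, ea, hea, hba⟩ := near_bound hp0ne a
  obtain ⟨δb, hδb, eb, heb, hbb⟩ := near_bound hp0ne b
  set δ : ℝ := min (min δa δb) ((b - a) / 3) with hδdef
  have hδa' : δ ≤ δa := le_trans (min_le_left _ _) (min_le_left _ _)
  have hδb' : δ ≤ δb := le_trans (min_le_left _ _) (min_le_right _ _)
  have hδ3 : δ ≤ (b - a) / 3 := min_le_right _ _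
  have hδpos : 0 < δ := lt_min (lt_min hδa hδb) (by linarith)
  have hmidsub : Icc (a + δ) (b - δ) ⊆ Icc a b :=
    Icc_subset_Icc (by linarith) (by linarith)
  have hmidne : (Icc (a + δ) (b - δ)).Nonempty := by
    rw [nonempty_Icc]; linarith
  obtain ⟨x0, hx0mem, hx0min⟩ := (isCompact_Icc (a := a + δ) (b := b - δ)).exists_isMinOn
    hmidne (hg.mono hmidsub)
  have hx0Ioo : x0 ∈ Ioo a b := ⟨by linarith [hx0mem.1], by linarith [hx0mem.2]⟩
  have hm1pos : 0 < g x0 := hgpos x0 hx0Ioo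
  set ma := p0.rootMultiplicity a with hmadef
  set mb := p0.rootMultiplicity b with hmbdef
  set r : ℕ := max (max ma mb) 1 with hrdef
  have hr1 : 0 < r := lt_of_lt_of_le one_pos (le_max_right _ _)
  set T : ℝ := max 1 ((b - a) / 2) with hTdef
  have hT1 : (1:ℝ) ≤ T := le_max_left _ _
  have hTpos : (0:ℝ) < T := lt_of_lt_of_le one_pos hT1
  have hTr : (0:ℝ) < T ^ r := pow_pos hTpos r
  set c0 : ℝ := min (ea / M1) (min (eb / M1) (g x0)) with hc0def
  have hc0pos : 0 < c0 :=
    lt_min (div_pos hea hM1pos) (lt_min (div_pos heb hM1pos) hm1pos)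
  refine ⟨c0 / T ^ r, div_pos hc0pos hTr, r, hr1, ?_⟩
  intro h hh x hx
  obtain ⟨hh0, hh2⟩ := hh
  obtain ⟨hx1, hx2⟩ := hx
  have hxIoo : x ∈ Ioo a b := ⟨by linarith, by linarith⟩
  have hhT : h ≤ T := le_trans hh2.le (le_max_right _ _)
  have hgx := hgpos x hxIoo
  have hMg : |p0.eval x| ≤ M1 * g x := hlow x hxIoo
  by_cases hca : x - a ≤ δ
  · -- near a
    have h1 : |x - a| ≤ δa := by
      rw [abs_of_pos (by linarith : (0:ℝ) < x - a)]
      linarith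
    have h2 := hba x h1
    rw [abs_of_pos (by linarith : (0:ℝ) < x - a)] at h2
    have h3 : ea * (x - a) ^ ma ≤ M1 * g x := le_trans h2 hMg
    have h4 : h ^ r ≤ (x - a) ^ ma * T ^ r := by
      refine le_trans (pow_aux hh0.le hhT hT1
        (le_trans (le_max_left ma mb) (le_max_left _ 1))) ?_
      exact mul_le_mul_of_nonneg_right
        (pow_le_pow_left₀ hh0.le (by linarith) ma) hTr.le
    have h5 : c0 ≤ ea / M1 := min_le_left _ _
    calc c0 / T ^ r * h ^ r ≤ ea / M1 / T ^ r * ((x - a) ^ ma * T ^ r) := by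
          apply mul_le_mul (by gcongr) h4 (pow_nonneg hh0.le r) (by positivity)
      _ = ea * (x - a) ^ ma / M1 := by field_simp
      _ ≤ M1 * g x / M1 := by gcongr
      _ = g x := by field_simp
  · by_cases hcb : b - x ≤ δ
    · -- near b
      have h1 : |x - b| ≤ δb := by
        rw [abs_of_neg (by linarith : x - b < 0)]
        have : -(x - b) = b - x := by ring
        rw [this]; linarith
      have h2 := hbb x h1
      rw [abs_of_neg (by linarith : x - b < 0)] at h2
      have hxb : -(x - b) = b - x := by ring
      rw [hxb] at h2
      have h3 : eb * (b - x) ^ mb ≤ M1 * g x := le_trans h2 hMg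
      have h4 : h ^ r ≤ (b - x) ^ mb * T ^ r := by
        refine le_trans (pow_aux hh0.le hhT hT1
          (le_trans (le_max_right ma mb) (le_max_left _ 1))) ?_
        exact mul_le_mul_of_nonneg_right
          (pow_le_pow_left₀ hh0.le (by linarith) mb) hTr.le
      have h5 : c0 ≤ eb / M1 := le_trans (min_le_right _ _) (min_le_left _ _)
      calc c0 / T ^ r * h ^ r ≤ eb / M1 / T ^ r * ((b - x) ^ mb * T ^ r) := by
            apply mul_le_mul (by gcongr) h4 (pow_nonneg hh0.le r) (by positivity)
        _ = eb * (b - x) ^ mb / M1 := by field_simp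
        _ ≤ M1 * g x / M1 := by gcongr
        _ = g x := by field_simp
    · -- middle
      push_neg at hca hcb
      have hxmid : x ∈ Icc (a + δ) (b - δ) := ⟨by linarith, by linarith⟩
      have h1 : g x0 ≤ g x := hx0min hxmid
      have h5 : c0 ≤ g x0 := le_trans (min_le_right _ _) (min_le_right _ _)
      have h4 : h ^ r ≤ T ^ r := pow_le_pow_left₀ hh0.le hhT r
      calc c0 / T ^ r * h ^ r ≤ g x0 / T ^ r * T ^ r := by
            apply mul_le_mul (by gcongr) h4 (pow_nonneg hh0.le r) (by positivity)
        _ = g x0 := by field_simp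
        _ ≤ g x := h1

def Phi : MvPolynomial (Fin 2) ℝ →ₐ[ℝ] Polynomial (Polynomial ℝ) :=
  MvPolynomial.aeval ![Polynomial.C Polynomial.X, Polynomial.X]

lemma pev_Phi (s t : ℝ) (p : MvPolynomial (Fin 2) ℝ) :
    pev s t (Phi p) = MvPolynomial.eval ![s, t] p := by
  have : (Polynomial.eval₂RingHom (Polynomial.evalRingHom s) t).comp
      (Phi.toRingHom) = MvPolynomial.eval ![s, t] := by
    apply MvPolynomial.ringHom_ext
    · intro r
      simp [Phi]
    · intro i
      fin_cases i <;> simp [Phi]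
  calc pev s t (Phi p)
      = ((Polynomial.eval₂RingHom (Polynomial.evalRingHom s) t).comp (Phi.toRingHom)) p := rfl
    _ = MvPolynomial.eval ![s, t] p := by rw [this]

lemma Phi_ne_zero {p : MvPolynomial (Fin 2) ℝ} (hp : p ≠ 0) : Phi p ≠ 0 := by
  intro h
  apply hp
  apply MvPolynomial.funext
  intro x
  have hx : ![x 0, x 1] = x := by
    funext i; fin_cases i <;> rfl
  have := pev_Phi (x 0) (x 1) p
  rw [h, hx] at this
  simpa [pev] using this.symm

lemma graph_poly {f : ℝ → ℝ} {a b : ℝ}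
    (hf : IsSemialgebraic {z : Fin 2 → ℝ | (z 0, z 1) ∈ {p : ℝ × ℝ | p.1 ∈ Icc a b ∧ p.2 = f p.1}}) :
    ∃ P : Polynomial (Polynomial ℝ), P ≠ 0 ∧ ∀ u ∈ Icc a b, pev u (f u) P = 0 := by
  classical
  obtain ⟨F, hF⟩ := hf
  set X := {z : Fin 2 → ℝ | (z 0, z 1) ∈ {p : ℝ × ℝ | p.1 ∈ Icc a b ∧ p.2 = f p.1}} with hX
  -- choose a nonzero equation polynomial from each cell (or 1)
  let pk : Finset (MvPolynomial (Fin 2) ℝ) × Finset (MvPolynomial (Fin 2) ℝ) →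
      MvPolynomial (Fin 2) ℝ := fun c =>
    if h : ∃ p ∈ c.1, p ≠ 0 then h.choose else 1
  have pk_ne : ∀ c, pk c ≠ 0 := by
    intro c
    by_cases h : ∃ p ∈ c.1, p ≠ 0
    · simp only [pk, dif_pos h]; exact h.choose_spec.2
    · simp only [pk, dif_neg h]; exact one_ne_zero
  refine ⟨∏ c ∈ F, Phi (pk c), ?_, ?_⟩
  · rw [Finset.prod_ne_zero_iff]
    exact fun c _ => Phi_ne_zero (pk_ne c)
  · intro u hu
    -- the graph point
    have hz : (![u, f u] : Fin 2 → ℝ) ∈ X := by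
      simp [hX]
      exact hu
    rw [hF] at hz
    simp only [mem_iUnion, exists_prop] at hz
    obtain ⟨c, hcF, hzc⟩ := hz
    simp only [mem_setOf_eq] at hzc
    -- the chosen polynomial of this cell vanishes at the point
    have hvan : MvPolynomial.eval ![u, f u] (pk c) = 0 := by
      by_cases h : ∃ p ∈ c.1, p ≠ 0
      · simp only [pk, dif_pos h]
        exact hzc.1 _ h.choose_spec.1
      · -- all equation polynomials of this cell are zero: the cell is open, contradiction
        exfalso
        push_neg at h
        set S := {x : Fin 2 → ℝ | ∀ q ∈ c.2, 0 < MvPolynomial.eval x q} with hS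
        have hopen : IsOpen S := by
          have : S = ⋂ q ∈ c.2, (fun x => MvPolynomial.eval x q) ⁻¹' Ioi 0 := by
            ext x; simp [hS]
          rw [this]
          exact isOpen_biInter_finset fun q _ =>
            (MvPolynomial.continuous_eval (p := q)).isOpen_preimage _ isOpen_Ioi
        have hzS : (![u, f u] : Fin 2 → ℝ) ∈ S := hzc.2
        obtain ⟨ε, hε, hball⟩ := Metric.isOpen_iff.1 hopen _ hzS
        set w : Fin 2 → ℝ := Function.update ![u, f u] 1 (f u + ε / 2) with hw
        have hwball : w ∈ Metric.ball ![u, f u] ε := by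
          rw [Metric.mem_ball]
          have : dist w ![u, f u] ≤ ε / 2 := by
            apply dist_pi_le_iff (by linarith) |>.2
            intro i
            fin_cases i
            · simp [hw, Function.update]
              positivity
            · simp [hw, Real.dist_eq, abs_div, abs_of_pos hε]
          linarith
        have hwS : w ∈ S := hball hwball
        have hwX : w ∈ X := by
          rw [hF]
          apply mem_iUnion₂.2
          refine ⟨c, hcF, ?_⟩
          simp only [mem_setOf_eq]
          exact ⟨fun p hp => by rw [h p hp]; simp, hwS⟩
        have hw0 : w 0 = u := by simp [hw, Function.update]
        have hw1 : w 1 = f u + ε / 2 := by simp [hw]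
        have := hwX.2
        rw [hw0, hw1] at this
        linarith
    -- finish: the product vanishes
    have : pev u (f u) (∏ c ∈ F, Phi (pk c)) =
        ∏ c ∈ F, pev u (f u) (Phi (pk c)) := by
      simp [pev, Polynomial.eval₂_finset_prod]
    rw [this]
    exact Finset.prod_eq_zero hcF (by rw [pev_Phi]; exact hvan)

namespace GapAux

abbrev Rx : Type := Polynomial ℝ
abbrev Rxz : Type := Polynomial Rx
abbrev KK : Type := FractionRing Rxz
abbrev Om : Type := AlgebraicClosure KK

def rho : Rx →+* KK := (algebraMap Rxz KK).comp (Polynomial.C : Rx →+* Rxz)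

lemma rho_injective : Function.Injective rho :=
  (IsFractionRing.injective Rxz KK).comp Polynomial.C_injective

def zK : KK := algebraMap Rxz KK Polynomial.X

def PP (P : Rxz) : Polynomial KK := P.map rho

def QQ (Q : Rxz) : Polynomial KK := (Q.map rho).comp (Polynomial.X + Polynomial.C zK)

lemma PP_ne_zero {P : Rxz} (hP : P ≠ 0) : PP P ≠ 0 := by
  intro h
  exact hP (Polynomial.map_injective rho rho_injective (by rw [Polynomial.map_zero]; exact h))

lemma algmap_eq : algebraMap Rx Om = (algebraMap KK Om).comp rho := by
  rw [IsScalarTower.algebraMap_eq Rx KK Om, IsScalarTower.algebraMap_eq Rx Rxz KK]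
  rfl

set_option synthInstance.maxHeartbeats 1000000 in
lemma algmap_Rx_Om_injective : Function.Injective (algebraMap Rx Om) := by
  rw [algmap_eq]
  exact (algebraMap KK Om).injective.comp rho_injective

abbrev L0 : Type := FractionRing Rx

set_option synthInstance.maxHeartbeats 1000000 in
noncomputable instance instAlgL0Om : Algebra L0 Om :=
  (IsFractionRing.lift algmap_Rx_Om_injective).toAlgebra

set_option synthInstance.maxHeartbeats 1000000 in
instance instTowerL0 : IsScalarTower Rx L0 Om :=
  IsScalarTower.of_algebraMap_eq' (RingHom.ext fun x =>
    (IsFractionRing.lift_algebraMap (K := L0) algmap_Rx_Om_injective x).symm)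

set_option maxHeartbeats 1000000 in
set_option synthInstance.maxHeartbeats 1000000 in
open scoped Classical in
lemma gcd_natDegree_zero {P Q : Rxz} (hP : P ≠ 0) (hQ : Q ≠ 0) :
    (EuclideanDomain.gcd (PP P) (QQ Q)).natDegree = 0 := by
  by_contra hdeg
  set G := EuclideanDomain.gcd (PP P) (QQ Q) with hG
  set ι := algebraMap KK Om with hι
  have hGP : G ∣ PP P := EuclideanDomain.gcd_dvd_left _ _
  have hGQ : G ∣ QQ Q := EuclideanDomain.gcd_dvd_right _ _
  -- a root of G in the algebraic closure
  have hdeg' : (G.map ι).degree ≠ 0 := by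
    rw [Polynomial.degree_map]
    intro h
    exact hdeg (Polynomial.natDegree_eq_zero_iff_degree_le_zero.2 (le_of_eq h))
  obtain ⟨t, ht⟩ := IsAlgClosed.exists_root (G.map ι) hdeg'
  have htP : Polynomial.eval t ((PP P).map ι) = 0 :=
    Polynomial.eval_eq_zero_of_dvd_of_eval_eq_zero (Polynomial.map_dvd ι hGP) ht
  have htQ : Polynomial.eval t ((QQ Q).map ι) = 0 :=
    Polynomial.eval_eq_zero_of_dvd_of_eval_eq_zero (Polynomial.map_dvd ι hGQ) ht
  set zbar : Om := ι zK with hzbar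
  -- evaluations over the base Rx
  have hPt : Polynomial.eval₂ (algebraMap Rx Om) t P = 0 := by
    have h1 : (PP P).map ι = P.map ((algebraMap KK Om).comp rho) := by
      rw [PP, Polynomial.map_map]
    rw [algmap_eq, ← Polynomial.eval_map, ← h1]
    exact htP
  have hQt : Polynomial.eval₂ (algebraMap Rx Om) (t + zbar) Q = 0 := by
    have h1 : (QQ Q).map ι =
        (Q.map ((algebraMap KK Om).comp rho)).comp (Polynomial.X + Polynomial.C zbar) := by
      rw [QQ, Polynomial.map_comp, Polynomial.map_map]
      simp [hzbar]
      rfl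
    rw [h1, Polynomial.eval_comp] at htQ
    simp only [Polynomial.eval_add, Polynomial.eval_X, Polynomial.eval_C] at htQ
    rw [algmap_eq, ← Polynomial.eval_map]
    exact htQ
  have halgP : IsAlgebraic L0 t := by
    refine ⟨P.map (algebraMap Rx L0), ?_, ?_⟩
    · intro h
      exact hP (Polynomial.map_injective _ (IsFractionRing.injective Rx L0) (by simpa using h))
    · rw [Polynomial.aeval_def, Polynomial.eval₂_map, ← IsScalarTower.algebraMap_eq Rx L0 Om]
      exact hPt
  have halgQ : IsAlgebraic L0 (t + zbar) := by
    refine ⟨Q.map (algebraMap Rx L0), ?_, ?_⟩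
    · intro h
      exact hQ (Polynomial.map_injective _ (IsFractionRing.injective Rx L0) (by simpa using h))
    · rw [Polynomial.aeval_def, Polynomial.eval₂_map, ← IsScalarTower.algebraMap_eq Rx L0 Om]
      exact hQt
  have halgz : IsAlgebraic L0 zbar := by
    have h1 := (isAlgebraic_iff_isIntegral).1 halgQ
    have h2 := (isAlgebraic_iff_isIntegral).1 halgP
    have h3 := h1.sub h2
    rw [add_sub_cancel_left] at h3
    exact (isAlgebraic_iff_isIntegral).2 h3
  have hza : IsAlgebraic Rx zbar := (IsFractionRing.isAlgebraic_iff Rx L0 Om).2 halgz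
  obtain ⟨f, hf0, hfz⟩ := hza
  -- f is a polynomial over Rx, i.e. an element of Rxz, killed by an injective map
  have hkey : (ι.comp (algebraMap Rxz KK)) f = 0 := by
    have h1 : Polynomial.eval₂ (algebraMap Rx Om) zbar f = 0 := by
      rwa [Polynomial.aeval_def] at hfz
    have h2 : (Polynomial.eval₂RingHom (algebraMap Rx Om) zbar : Rxz →+* Om) =
        ι.comp (algebraMap Rxz KK) := by
      apply Polynomial.ringHom_ext
      · intro p
        simp only [Polynomial.coe_eval₂RingHom, Polynomial.eval₂_C, RingHom.comp_apply]
        rw [algmap_eq]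
        rfl
      · simp only [Polynomial.coe_eval₂RingHom, Polynomial.eval₂_X, RingHom.comp_apply]
        rfl
    calc (ι.comp (algebraMap Rxz KK)) f
        = (Polynomial.eval₂RingHom (algebraMap Rx Om) zbar : Rxz →+* Om) f := by rw [h2]
      _ = 0 := h1
  have : f = 0 := by
    apply (ι.injective.comp (IsFractionRing.injective Rxz KK))
    simpa using hkey
  exact hf0 this


set_option maxHeartbeats 1000000 in
set_option synthInstance.maxHeartbeats 1000000 in
open scoped Classical in
lemma gap_poly {P Q : Polynomial (Polynomial ℝ)} (hP : P ≠ 0) (hQ : Q ≠ 0) :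
    ∃ R : Polynomial (Polynomial ℝ), R ≠ 0 ∧
      ∀ s u v : ℝ, pev s u P = 0 → pev s v Q = 0 → pev s (v - u) R = 0 := by
  have hgcd := gcd_natDegree_zero hP hQ
  set G := EuclideanDomain.gcd (PP P) (QQ Q) with hG
  have hGne : G ≠ 0 := by
    intro h
    rw [hG, EuclideanDomain.gcd_eq_zero_iff] at h
    exact PP_ne_zero hP h.1
  have hγeq : G = Polynomial.C (G.coeff 0) := Polynomial.eq_C_of_natDegree_eq_zero hgcd
  set γ := G.coeff 0 with hγdef
  have hγ0 : γ ≠ 0 := fun h => hGne (by rw [hγeq, h, map_zero])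
  have key : PP P * EuclideanDomain.gcdA (PP P) (QQ Q) +
      QQ Q * EuclideanDomain.gcdB (PP P) (QQ Q) = Polynomial.C γ := by
    rw [← hγeq, hG]
    exact (EuclideanDomain.gcd_eq_gcd_ab _ _).symm
  set A := EuclideanDomain.gcdA (PP P) (QQ Q) with hA
  set B := EuclideanDomain.gcdB (PP P) (QQ Q) with hB
  obtain ⟨bA, hbA⟩ := IsLocalization.integerNormalization_map_to_map (nonZeroDivisors Rxz) A
  obtain ⟨bB, hbB⟩ := IsLocalization.integerNormalization_map_to_map (nonZeroDivisors Rxz) B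
  obtain ⟨n, d, hd, hnd⟩ := IsFractionRing.div_surjective (A := Rxz) (K := KK) γ
  have hdne : algebraMap Rxz KK d ≠ 0 := by
    intro h
    exact nonZeroDivisors.ne_zero hd ((injective_iff_map_eq_zero _).1 (IsFractionRing.injective Rxz KK) _ h)
  have hdn : algebraMap Rxz KK n = γ * algebraMap Rxz KK d := by
    field_simp at hnd
    linear_combination hnd
  have hn0 : n ≠ 0 := by
    intro h
    rw [h, map_zero] at hdn
    exact hγ0 (by
      rcases mul_eq_zero.1 hdn.symm with h' | h'
      · exact h'
      · exact absurd h' hdne)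
  set Atil := IsLocalization.integerNormalization (nonZeroDivisors Rxz) A with hAtil
  set Btil := IsLocalization.integerNormalization (nonZeroDivisors Rxz) B with hBtil
  set P2 : Polynomial Rxz := P.map (Polynomial.C : Rx →+* Rxz) with hP2
  set Q2 : Polynomial Rxz :=
    (Q.map (Polynomial.C : Rx →+* Rxz)).comp (Polynomial.X + Polynomial.C Polynomial.X) with hQ2
  set R : Rxz := (bA : Rxz) * (bB : Rxz) * n with hRdef
  have hR0 : R ≠ 0 := by
    apply mul_ne_zero (mul_ne_zero _ _) hn0
    · exact nonZeroDivisors.ne_zero bA.2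
    · exact nonZeroDivisors.ne_zero bB.2
  -- the Bezout identity with cleared denominators, over Rxz
  have hmain : Polynomial.C ((bB : Rxz) * d) * Atil * P2 +
      Polynomial.C ((bA : Rxz) * d) * Btil * Q2 = Polynomial.C R := by
    apply Polynomial.map_injective (algebraMap Rxz KK) (IsFractionRing.injective Rxz KK)
    have hMP2 : P2.map (algebraMap Rxz KK) = PP P := by
      rw [hP2, Polynomial.map_map]; rfl
    have hMQ2 : Q2.map (algebraMap Rxz KK) = QQ Q := by
      rw [hQ2, Polynomial.map_comp, Polynomial.map_map, Polynomial.map_add,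
        Polynomial.map_X, Polynomial.map_C]
      rfl
    rw [Polynomial.map_add, Polynomial.map_mul, Polynomial.map_mul, Polynomial.map_mul,
      Polynomial.map_mul, hMP2, hMQ2, hbA, hbB, Polynomial.map_C, Polynomial.map_C,
      Polynomial.map_C]
    have hsA : (bA : Rxz) • A = Polynomial.C (algebraMap Rxz KK (bA : Rxz)) * A := by
      rw [Algebra.smul_def, Polynomial.algebraMap_apply]
    have hsB : (bB : Rxz) • B = Polynomial.C (algebraMap Rxz KK (bB : Rxz)) * B := by
      rw [Algebra.smul_def, Polynomial.algebraMap_apply]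
    rw [hsA, hsB, hRdef]
    have hdnC : Polynomial.C (algebraMap Rxz KK n) =
        Polynomial.C γ * Polynomial.C (algebraMap Rxz KK d) := by
      rw [hdn, map_mul]
    simp only [map_mul]
    linear_combination (Polynomial.C ((algebraMap Rxz KK) (bA : Rxz)) *
        Polynomial.C ((algebraMap Rxz KK) (bB : Rxz)) *
        Polynomial.C ((algebraMap Rxz KK) d)) * key -
      Polynomial.C ((algebraMap Rxz KK) (bA : Rxz)) *
        Polynomial.C ((algebraMap Rxz KK) (bB : Rxz)) * hdnC
  refine ⟨R, hR0, ?_⟩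
  intro s u v hu hv
  set inner : Rxz →+* ℝ := Polynomial.eval₂RingHom (Polynomial.evalRingHom s) (v - u) with hinner
  have hinnerC : inner.comp (Polynomial.C : Rx →+* Rxz) = Polynomial.evalRingHom s := by
    apply RingHom.ext
    intro p
    simp [hinner]
  have hE := congrArg (Polynomial.eval₂ inner u) hmain
  rw [Polynomial.eval₂_add, Polynomial.eval₂_mul, Polynomial.eval₂_mul, Polynomial.eval₂_mul,
    Polynomial.eval₂_mul, Polynomial.eval₂_C, Polynomial.eval₂_C, Polynomial.eval₂_C] at hE
  have hEP2 : Polynomial.eval₂ inner u P2 = 0 := by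
    rw [hP2, Polynomial.eval₂_map, hinnerC]
    exact hu
  have hEQ2 : Polynomial.eval₂ inner u Q2 = 0 := by
    rw [hQ2, Polynomial.eval₂_comp]
    have h1 : Polynomial.eval₂ inner u (Polynomial.X + Polynomial.C Polynomial.X) = v := by
      rw [Polynomial.eval₂_add, Polynomial.eval₂_X, Polynomial.eval₂_C]
      have : inner Polynomial.X = v - u := by
        simp [hinner]
      rw [this]; ring
    rw [h1, Polynomial.eval₂_map, hinnerC]
    exact hv
  rw [hEP2, hEQ2] at hE
  simp only [mul_zero, add_zero, zero_add] at hE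
  exact hE.symm

end GapAux

end AuxLoja

/-- If `β, τ : [a,b] → ℝ` are continuous semialgebraic with
`β(x) < τ(x)` for all `x ∈ (a,b)`, then there are `C > 0` and a positive integer `r`
such that `τ(x) - β(x) ≥ C h^r` whenever `h ∈ (0, (b-a)/2)` and `x ∈ [a+h, b-h]`. -/
theorem gap_lower_bound_lojasiewicz
    (a b : ℝ) (hab : a < b) (β τ : ℝ → ℝ)
    (hβc : ContinuousOn β (Icc a b)) (hτc : ContinuousOn τ (Icc a b))
    (hβsa : IsSemialgebraicFnOn β a b) (hτsa : IsSemialgebraicFnOn τ a b)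
    (hlt : ∀ x ∈ Ioo a b, β x < τ x) :
    ∃ C > (0:ℝ), ∃ r : ℕ, 0 < r ∧
      ∀ h ∈ Ioo (0:ℝ) ((b - a) / 2), ∀ x ∈ Icc (a + h) (b - h),
        C * h ^ r ≤ τ x - β x := by
  obtain ⟨P, hP0, hPv⟩ := graph_poly hβsa
  obtain ⟨Q, hQ0, hQv⟩ := graph_poly hτsa
  obtain ⟨R, hR0, hRv⟩ := GapAux.gap_poly hP0 hQ0
  have hgc : ContinuousOn (fun x => τ x - β x) (Icc a b) := hτc.sub hβc
  have hmain := endgameAux hab hgc (fun x hx => sub_pos.2 (hlt x hx)) hR0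
    (fun s hs => hRv s (β s) (τ s) (hPv s hs) (hQv s hs))
  obtain ⟨C, hC, r, hr, hfin⟩ := hmain
  exact ⟨C, hC, r, hr, fun h hh x hx => hfin h hh x hx⟩
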